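/- arXiv:1202.0020 — 2 statements merged into one kernel-verified Lean document; each statement's English description precedes it below -/
import Mathlib

section
/- Let n > 0 be a real number, define the generalized binomial coefficient B(n,k) = (∏_{j=0}^{k−1} (n − j)) / k! for k ∈ ℕ, and let φ ∈ (−π, π). Then the series ∑_{k≥0} B(n,k)·sin(kφ) has sum 2^n · cos(φ/2)^n · sin(nφ/2) (in the sense of HasSum). -/
noncomputable def bcoef (n : ℝ) (k : ℕ) : ℝ := (∏ j ∈ Finset.range k, (n - j)) / k.factorial

lemma bcoef_succ (n : ℝ) (k : ℕ) : bcoef n (k + 1) = bcoef n k * ((n - k) / (k + 1)) := by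
  unfold bcoef
  rw [Finset.prod_range_succ, Nat.factorial_succ]
  push_cast
  rw [div_mul_div_comm]
  rw [div_eq_div_iff (by positivity) (by positivity)]
  ring

lemma bcoef_summable_abs (n : ℝ) (hn : 0 < n) : Summable (fun k => |bcoef n k|) := by
  set N := ⌈n⌉₊ with hN
  have hnN : n ≤ N := Nat.le_ceil n
  rw [← summable_nat_add_iff N]
  set b : ℕ → ℝ := fun i => |bcoef n (i + N)| with hb
  have key : ∀ i : ℕ, n * b i = (N + i) * b i - (N + i + 1) * b (i + 1) := by
    intro i
    have h1 : b (i + 1) = b i * ((N + i - n) / (N + i + 1)) := by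
      simp only [hb]
      rw [show i + 1 + N = (i + N) + 1 by omega, bcoef_succ n (i + N), abs_mul, abs_div]
      have hle : n ≤ (i : ℝ) + N := le_trans hnN (by push_cast; linarith [Nat.cast_nonneg (α := ℝ) i])
      have e1 : |n - ((i + N : ℕ) : ℝ)| = ↑i + ↑N - n := by
        rw [abs_of_nonpos (by push_cast; linarith)]; push_cast; ring
      have e2 : |((i + N : ℕ) : ℝ) + 1| = ↑i + ↑N + 1 := by
        rw [abs_of_nonneg (by positivity)]; push_cast; ring
      rw [e1, e2]
      ring_nf
    rw [h1]
    have h2 : ((N : ℝ) + i + 1) ≠ 0 := by positivity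
    field_simp
    ring
  apply summable_of_sum_range_le (c := (N : ℝ) * b 0 / n) (fun i => abs_nonneg _)
  intro m
  have this1 := Finset.sum_range_sub' (fun i => ((N : ℝ) + i) * b i) m
  have tele : ∑ i ∈ Finset.range m, n * b i
      = ((N : ℝ) + ((0:ℕ):ℝ)) * b 0 - ((N : ℝ) + (m:ℝ)) * b m := by
    rw [← this1]
    apply Finset.sum_congr rfl
    intro i _
    rw [key i]; push_cast; ring
  have hsum : n * ∑ i ∈ Finset.range m, b i ≤ (N : ℝ) * b 0 := by
    rw [Finset.mul_sum, tele]
    have : 0 ≤ ((N : ℝ) + m) * b m := by positivity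
    norm_num
    linarith
  rw [le_div_iff₀ hn]
  linarith

lemma bcoef_zero (n : ℝ) : bcoef n 0 = 1 := by simp [bcoef]

open Complex

noncomputable def Fb (n : ℝ) (z : ℂ) : ℂ := ∑' k : ℕ, (bcoef n k : ℂ) * z ^ k

lemma Fb_summable (n : ℝ) (hn : 0 < n) {z : ℂ} (hz : ‖z‖ ≤ 1) :
    Summable (fun k : ℕ => (bcoef n k : ℂ) * z ^ k) := by
  apply Summable.of_norm_bounded (bcoef_summable_abs n hn)
  intro k
  rw [norm_mul, norm_pow]
  calc ‖(bcoef n k : ℂ)‖ * ‖z‖ ^ k ≤ ‖(bcoef n k : ℂ)‖ * 1 := by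
        apply mul_le_mul_of_nonneg_left (pow_le_one₀ (norm_nonneg z) hz) (norm_nonneg _)
    _ = |bcoef n k| := by rw [mul_one, Complex.norm_real, Real.norm_eq_abs]

lemma Fb_zero (n : ℝ) : Fb n 0 = 1 := by
  unfold Fb
  rw [tsum_eq_single 0 (by intro k hk; simp [zero_pow hk])]
  simp [bcoef_zero]

lemma Fb_eq_cpow (n : ℝ) (hn : 0 < n) {z : ℂ} (hz : ‖z‖ < 1) :
    Fb n z = (1 + z) ^ (n : ℂ) := by
  obtain ⟨r, hr1, hr2⟩ := exists_between hz
  have hr0 : 0 < r := lt_of_le_of_lt (norm_nonneg z) hr1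
  set t : Set ℂ := Metric.ball 0 r with ht
  have htopen : IsOpen t := Metric.isOpen_ball
  have htconv : Convex ℝ t := convex_ball 0 r
  -- uniform bound on coefficients
  set C : ℝ := ∑' k, |bcoef n k| with hC
  have hCb : ∀ k, |bcoef n k| ≤ C := fun k =>
    Summable.le_tsum (bcoef_summable_abs n hn) k (fun j _ => abs_nonneg _)
  -- summable bound for derivatives
  set u : ℕ → ℝ := fun k => C / r * (k * r ^ k) with hu
  have husum : Summable u := by
    apply Summable.mul_left
    have := summable_pow_mul_geometric_of_norm_lt_one (R := ℝ) 1 (r := r)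
      (by rw [Real.norm_eq_abs, abs_of_pos hr0]; exact hr2)
    simpa using this
  -- termwise derivatives
  set g : ℕ → ℂ → ℂ := fun k w => (bcoef n k : ℂ) * w ^ k with hg
  set g' : ℕ → ℂ → ℂ := fun k w => (bcoef n k : ℂ) * (k * w ^ (k - 1)) with hg'
  have hderiv : ∀ k (w : ℂ), HasDerivAt (g k) (g' k w) w := fun k w =>
    (hasDerivAt_pow k w).const_mul _
  have hbound : ∀ k (w : ℂ), w ∈ t → ‖g' k w‖ ≤ u k := by
    intro k w hw
    rw [Metric.mem_ball, dist_zero_right] at hw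
    rcases Nat.eq_zero_or_pos k with rfl | hk
    · simp [hg', hu]
    · have : ‖g' k w‖ = |bcoef n k| * (k * ‖w‖ ^ (k - 1)) := by
        simp [hg', norm_mul, norm_pow, Complex.norm_real, Real.norm_eq_abs,
          Complex.norm_natCast]
      rw [this, hu]
      have h1 : ‖w‖ ^ (k - 1) ≤ r ^ (k - 1) :=
        pow_le_pow_left₀ (norm_nonneg w) hw.le _
      have h2 : r ^ (k - 1) = r ^ k / r := by
        rw [eq_div_iff hr0.ne', ← pow_succ, Nat.sub_add_cancel hk]
      have hC0 : 0 ≤ C := le_trans (abs_nonneg _) (hCb 0)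
      calc |bcoef n k| * (k * ‖w‖ ^ (k - 1)) ≤ C * (k * (r ^ k / r)) := by
            rw [← h2]
            exact mul_le_mul (hCb k)
              (mul_le_mul_of_nonneg_left h1 (Nat.cast_nonneg k)) (by positivity) hC0
        _ = C / r * (k * r ^ k) := by ring
  -- derivative of Fb on t
  set S : ℂ → ℂ := fun w => ∑' k : ℕ, g' k w with hS
  have h0t : (0 : ℂ) ∈ t := Metric.mem_ball_self hr0
  have hzt : z ∈ t := by rwa [Metric.mem_ball, dist_zero_right]
  have hFderiv : ∀ w ∈ t, HasDerivAt (Fb n) (S w) w := by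
    intro w hw
    exact hasDerivAt_tsum_of_isPreconnected husum htopen htconv.isPreconnected
      (fun k y _ => hderiv k y) hbound h0t
      (by simpa [hg] using Fb_summable n hn (z := 0) (by simp)) hw
  -- the ODE (1+w) S w = n Fb w
  have hODE : ∀ w ∈ t, (1 + w) * S w = (n : ℂ) * Fb n w := by
    intro w hw
    have hwn : ‖w‖ < r := by rwa [Metric.mem_ball, dist_zero_right] at hw
    have hwle : ‖w‖ ≤ 1 := hwn.le.trans hr2.le
    have hSsum : HasSum (fun k => g' k w) (S w) :=
      (Summable.of_norm_bounded husum (fun k => hbound k w hw)).hasSum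
    have h1 : HasSum (fun k : ℕ => g' (k + 1) w) (S w) := by
      have := (hasSum_nat_add_iff' (f := fun k => g' k w) 1).mpr hSsum
      simpa [hg'] using this
    have hfun1 : (fun k : ℕ => g' (k + 1) w)
        = fun k : ℕ => ((n : ℂ) - k) * ((bcoef n k : ℂ) * w ^ k) := by
      funext k
      have hreal : ((k : ℝ) + 1) * bcoef n (k + 1) = (n - k) * bcoef n k := by
        rw [bcoef_succ]
        have : ((k : ℝ) + 1) ≠ 0 := by positivity
        field_simp
      have hcplx := congrArg (fun x : ℝ => (x : ℂ)) hreal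
      push_cast at hcplx
      simp only [hg', Nat.add_sub_cancel]
      push_cast
      linear_combination w ^ k * hcplx
    rw [hfun1] at h1
    have hfun2 : (fun k : ℕ => w * g' k w)
        = fun k : ℕ => (k : ℂ) * ((bcoef n k : ℂ) * w ^ k) := by
      funext k
      cases k with
      | zero => simp [hg']
      | succ m => simp only [hg', Nat.add_sub_cancel]; push_cast; ring
    have h3 : HasSum (fun k : ℕ => (k : ℂ) * ((bcoef n k : ℂ) * w ^ k)) (w * S w) := by
      have := hSsum.mul_left w
      rwa [hfun2] at this
    have hF : HasSum (fun k : ℕ => (bcoef n k : ℂ) * w ^ k) (Fb n w) :=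
      (Fb_summable n hn hwle).hasSum
    have h4 := h1.add h3
    have hfun3 : (fun k : ℕ => ((n : ℂ) - k) * ((bcoef n k : ℂ) * w ^ k)
          + (k : ℂ) * ((bcoef n k : ℂ) * w ^ k))
        = fun k : ℕ => (n : ℂ) * ((bcoef n k : ℂ) * w ^ k) := by
      funext k; ring
    rw [hfun3] at h4
    have := h4.unique (hF.mul_left (n : ℂ))
    linear_combination this
  -- slit plane facts
  have hslit : ∀ w ∈ t, 1 + w ∈ slitPlane := by
    intro w hw
    have hwn : ‖w‖ < r := by rwa [Metric.mem_ball, dist_zero_right] at hw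
    refine mem_slitPlane_iff.mpr (Or.inl ?_)
    have h1 : |w.re| ≤ ‖w‖ := Complex.abs_re_le_norm w
    simp only [Complex.add_re, Complex.one_re]
    linarith [(abs_le.mp h1).1]
  have hne : ∀ w ∈ t, (1 + w) ≠ 0 := fun w hw => slitPlane_ne_zero (hslit w hw)
  -- G is constant
  set G : ℂ → ℂ := fun w => Fb n w * (1 + w) ^ (-(n : ℂ)) with hGdef
  have hGderiv : ∀ w ∈ t, HasDerivAt G 0 w := by
    intro w hw
    have hcp : HasDerivAt (fun w : ℂ => (1 + w) ^ (-(n : ℂ)))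
        ((-(n : ℂ)) * (1 + w) ^ (-(n : ℂ) - 1) * 1) w :=
      ((hasDerivAt_id w).const_add 1).cpow_const (hslit w hw)
    have hmul := (hFderiv w hw).mul hcp
    have e : (1 + w) ^ (-(n : ℂ)) = (1 + w) ^ (-(n : ℂ) - 1) * (1 + w) ^ (1 : ℂ) := by
      rw [← cpow_add _ _ (hne w hw)]
      ring_nf
    rw [cpow_one] at e
    have hval : S w * (1 + w) ^ (-(n : ℂ))
        + Fb n w * ((-(n : ℂ)) * (1 + w) ^ (-(n : ℂ) - 1) * 1) = 0 := by
      rw [e]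
      linear_combination ((1 + w) ^ (-(n : ℂ) - 1)) * hODE w hw
    rw [hval] at hmul
    exact hmul
  have hGdiff : DifferentiableOn ℂ G t := fun w hw =>
    ((hGderiv w hw).differentiableAt).differentiableWithinAt
  have hGfderiv : ∀ w ∈ t, fderivWithin ℂ G t w = 0 := by
    intro w hw
    rw [fderivWithin_of_isOpen htopen hw, ((hGderiv w hw).hasFDerivAt).fderiv]
    ext
    simp
  have hconst : G z = G 0 :=
    Convex.is_const_of_fderivWithin_eq_zero htconv hGdiff hGfderiv hzt h0t
  have hG0 : G 0 = 1 := by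
    simp only [hGdef, Fb_zero, add_zero, one_cpow, one_mul]
  rw [hG0] at hconst
  have hnz : (1 + z) ^ (n : ℂ) ≠ 0 := by
    rw [Ne, cpow_eq_zero_iff]
    push_neg
    intro h
    exact absurd h (hne z hzt)
  rw [hGdef] at hconst
  simp only [cpow_neg] at hconst
  field_simp at hconst
  exact hconst

lemma Fb_boundary (n : ℝ) (hn : 0 < n) {z : ℂ} (hz : ‖z‖ = 1) (hsl : 1 + z ∈ slitPlane) :
    Fb n z = (1 + z) ^ (n : ℂ) := by
  have hcont : ContinuousOn (Fb n) (Metric.closedBall 0 1) := by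
    apply continuousOn_tsum (f := fun (k : ℕ) (w : ℂ) => (bcoef n k : ℂ) * w ^ k)
      (fun k => Continuous.continuousOn (by continuity)) (bcoef_summable_abs n hn)
    intro k w hw
    rw [Metric.mem_closedBall, dist_zero_right] at hw
    rw [norm_mul, norm_pow, Complex.norm_real, Real.norm_eq_abs]
    calc |bcoef n k| * ‖w‖ ^ k ≤ |bcoef n k| * 1 :=
          mul_le_mul_of_nonneg_left (pow_le_one₀ (norm_nonneg w) hw) (abs_nonneg _)
      _ = |bcoef n k| := mul_one _
  set l := nhdsWithin (1 : ℝ) (Set.Ioo (0 : ℝ) 1) with hl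
  haveI hlne : l.NeBot := by
    apply mem_closure_iff_nhdsWithin_neBot.mp
    rw [closure_Ioo (by norm_num : (0 : ℝ) ≠ 1)]
    exact ⟨zero_le_one, le_refl 1⟩
  have hmap : Filter.Tendsto (fun r : ℝ => (r : ℂ) * z) l
      (nhdsWithin z (Metric.closedBall 0 1)) := by
    rw [tendsto_nhdsWithin_iff]
    constructor
    · have hc : Continuous fun r : ℝ => (r : ℂ) * z := by continuity
      have h' : Filter.Tendsto (fun r : ℝ => (r : ℂ) * z) (nhds 1) (nhds z) := by
        simpa using hc.tendsto 1
      exact h'.mono_left (nhdsWithin_le_nhds (s := Set.Ioo (0:ℝ) 1))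
    · filter_upwards [self_mem_nhdsWithin] with r hr
      rw [Metric.mem_closedBall, dist_zero_right, norm_mul, hz, mul_one,
        Complex.norm_real, Real.norm_eq_abs, abs_of_pos hr.1]
      exact hr.2.le
  have hzmem : z ∈ Metric.closedBall (0 : ℂ) 1 := by
    rw [Metric.mem_closedBall, dist_zero_right, hz]
  have h1 : Filter.Tendsto (fun r : ℝ => Fb n ((r : ℂ) * z)) l (nhds (Fb n z)) :=
    ((hcont z hzmem).tendsto).comp hmap
  have h2 : Filter.Tendsto (fun r : ℝ => (1 + (r : ℂ) * z) ^ (n : ℂ)) l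
      (nhds ((1 + z) ^ (n : ℂ))) := by
    have hc : ContinuousAt (fun w : ℂ => w ^ (n : ℂ)) (1 + z) := continuousAt_cpow_const hsl
    have hc2 : Filter.Tendsto (fun r : ℝ => 1 + (r : ℂ) * z) l (nhds (1 + z)) := by
      have hcc : Continuous fun r : ℝ => 1 + (r : ℂ) * z := by continuity
      have h' : Filter.Tendsto (fun r : ℝ => 1 + (r : ℂ) * z) (nhds 1) (nhds (1 + z)) := by
        simpa using hcc.tendsto 1
      exact h'.mono_left (nhdsWithin_le_nhds (s := Set.Ioo (0:ℝ) 1))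
    exact hc.tendsto.comp hc2
  have heq : ∀ᶠ r : ℝ in l, Fb n ((r : ℂ) * z) = (1 + (r : ℂ) * z) ^ (n : ℂ) := by
    filter_upwards [self_mem_nhdsWithin] with r hr
    apply Fb_eq_cpow n hn
    rw [norm_mul, hz, mul_one, Complex.norm_real, Real.norm_eq_abs, abs_of_pos hr.1]
    exact hr.2
  exact tendsto_nhds_unique (h1.congr' heq) h2

theorem binomial_series_sin (n : ℝ) (hn : 0 < n) (φ : ℝ) (hφ : φ ∈ Set.Ioo (-Real.pi) Real.pi) :
    HasSum
      (fun k : ℕ => ((∏ j ∈ Finset.range k, (n - j)) / k.factorial) * Real.sin (k * φ))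
      ((2 : ℝ) ^ n * Real.cos (φ / 2) ^ n * Real.sin (n * φ / 2)) := by
  obtain ⟨hφ1, hφ2⟩ := hφ
  have hc2 : 0 < Real.cos (φ / 2) :=
    Real.cos_pos_of_mem_Ioo ⟨by linarith, by linarith⟩
  set z : ℂ := Complex.exp (φ * I) with hzdef
  have hz : ‖z‖ = 1 := by
    rw [hzdef, Complex.norm_exp_ofReal_mul_I]
  have hre : (1 + z).re = 1 + Real.cos φ := by
    rw [hzdef]
    simp [Complex.add_re, Complex.exp_ofReal_mul_I_re]
  have hpos : 0 < 1 + Real.cos φ := by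
    have hs := Real.cos_sq (φ / 2)
    rw [show 2 * (φ / 2) = φ by ring] at hs
    nlinarith [hc2]
  have hsl : 1 + z ∈ Complex.slitPlane :=
    Complex.mem_slitPlane_iff.mpr (Or.inl (by rw [hre]; exact hpos))
  have hsum : HasSum (fun k : ℕ => (bcoef n k : ℂ) * z ^ k) ((1 + z) ^ (n : ℂ)) := by
    have h := (Fb_summable n hn hz.le).hasSum
    rwa [show (∑' k : ℕ, (bcoef n k : ℂ) * z ^ k) = Fb n z from rfl,
      Fb_boundary n hn hz hsl] at h
  have him := hsum.mapL Complex.imCLM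
  have hfun : (fun k : ℕ => Complex.imCLM ((bcoef n k : ℂ) * z ^ k))
      = fun k : ℕ => bcoef n k * Real.sin (k * φ) := by
    funext k
    have hzk : z ^ k = Complex.exp (((k : ℝ) * φ : ℝ) * I) := by
      rw [hzdef, ← Complex.exp_nat_mul]
      push_cast
      ring_nf
    rw [hzk]
    simp only [Complex.imCLM_apply, Complex.mul_im, Complex.ofReal_re, Complex.ofReal_im,
      Complex.exp_ofReal_mul_I_im, Complex.exp_ofReal_mul_I_re, zero_mul, add_zero]
  rw [hfun] at him
  have hval : Complex.imCLM ((1 + z) ^ (n : ℂ))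
      = 2 ^ n * Real.cos (φ / 2) ^ n * Real.sin (n * φ / 2) := by
    set R : ℝ := 2 * Real.cos (φ / 2) with hRdef
    have hR : 0 < R := by positivity
    set θ : ℝ := φ / 2 with hθdef
    set W : ℂ := (R : ℂ) * (Complex.cos θ + Complex.sin θ * I) with hWdef
    have he : 1 + z = W := by
      rw [hzdef, hWdef, Complex.exp_mul_I]
      have h2θ : (φ : ℂ) = 2 * (θ : ℂ) := by rw [hθdef]; push_cast; ring
      rw [h2θ, Complex.cos_two_mul, Complex.sin_two_mul]
      push_cast [hRdef]
      ring
    have hWexp : W = (R : ℂ) * Complex.exp (θ * I) := by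
      rw [hWdef, Complex.exp_mul_I]
    have habs : ‖W‖ = R := by
      rw [hWexp, norm_mul, Complex.norm_exp_ofReal_mul_I, Complex.norm_real, Real.norm_eq_abs,
        abs_of_pos hR, mul_one]
    have harg : Complex.arg W = θ := by
      rw [hWdef]
      exact Complex.arg_mul_cos_add_sin_mul_I hR ⟨by rw [hθdef]; linarith, by rw [hθdef]; linarith [Real.pi_pos]⟩
    have hWne : W ≠ 0 := by rw [← he]; exact Complex.slitPlane_ne_zero hsl
    have hlog : Complex.log W = (Real.log R : ℂ) + (θ : ℂ) * I := by
      apply Complex.ext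
      · simp [Complex.log_re, habs]
      · simp [Complex.log_im, harg]
    rw [he, Complex.cpow_def_of_ne_zero hWne, hlog]
    have hre2 : (((Real.log R : ℂ) + (θ : ℂ) * I) * (n : ℂ)).re = Real.log R * n := by
      simp [Complex.add_re, Complex.mul_re]
    have him2 : (((Real.log R : ℂ) + (θ : ℂ) * I) * (n : ℂ)).im = θ * n := by
      simp [Complex.add_im, Complex.mul_im]
    simp only [Complex.imCLM_apply, Complex.exp_im, hre2, him2]
    rw [← Real.rpow_def_of_pos hR, hRdef, Real.mul_rpow (by norm_num) hc2.le,
      show θ * n = n * φ / 2 by rw [hθdef]; ring]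
  rw [hval] at him
  exact him
end

section
/- Define B(1/2, k) = (∏_{j=0}^{k−1} (1/2 − j)) / k! for k ∈ ℕ. Then ∑_{k≥0} B(1/2, k) · cos(kπ/3) = (1/2)·√(3 + 2√3). -/
open Finset Polynomial

noncomputable def Bh (k : ℕ) : ℝ := (∏ j ∈ Finset.range k, ((1 : ℝ) / 2 - j)) / k.factorial

noncomputable def uh : ℕ → ℝ
  | 0 => 1
  | k + 1 => uh k * (2 * k + 1) / (2 * k + 2)

lemma uh_pos (k : ℕ) : 0 < uh k := by
  induction k with
  | zero => norm_num [uh]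
  | succ k ih => rw [uh]; positivity

lemma uh_one : uh 1 = 1 / 2 := by norm_num [uh]

lemma Bh_zero : Bh 0 = 1 := by simp [Bh]

lemma Bh_one : Bh 1 = 1 / 2 := by norm_num [Bh]

lemma Bh_succ (k : ℕ) : Bh (k + 1) = Bh k * ((1 : ℝ) / 2 - k) / (k + 1) := by
  have h : (k.factorial : ℝ) ≠ 0 := Nat.cast_ne_zero.2 k.factorial_ne_zero
  rw [Bh, Bh, Finset.prod_range_succ, Nat.factorial_succ]
  push_cast
  rw [div_mul_eq_mul_div, div_div, mul_comm ((k:ℝ) + 1)]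

lemma Bh_eq (k : ℕ) : Bh (k + 1) = (-1 : ℝ) ^ k * uh k / (2 * k + 2) := by
  induction k with
  | zero => norm_num [Bh_one, uh]
  | succ k ih =>
    rw [Bh_succ, ih, uh]
    have h1 : ((k : ℝ) + 1) ≠ 0 := by positivity
    have h2 : (2 * (k : ℝ) + 2) ≠ 0 := by positivity
    push_cast
    field_simp
    ring

lemma abs_Bh (k : ℕ) : |Bh (k + 1)| = uh k - uh (k + 1) := by
  have hu := uh_pos k
  have : uh k - uh (k + 1) = uh k / (2 * k + 2) := by
    rw [uh]; field_simp; ring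
  rw [this, Bh_eq, abs_div, abs_mul, abs_pow, abs_neg, abs_one, one_pow, one_mul,
    abs_of_pos hu, abs_of_pos (by positivity : (0:ℝ) < 2 * (k:ℝ) + 2)]

lemma summable_abs_Bh : Summable (fun k => |Bh k|) := by
  apply summable_of_sum_range_le (c := 2) (fun k => abs_nonneg _)
  intro n
  cases n with
  | zero => norm_num
  | succ m =>
    rw [Finset.sum_range_succ']
    have : ∑ i ∈ Finset.range m, |Bh (i + 1)| = uh 0 - uh m := by
      simp only [abs_Bh]
      exact Finset.sum_range_sub' uh m
    rw [this]
    have := uh_pos m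
    simp [Bh_zero, uh]
    linarith

lemma smeval_descPochhammer (r : ℝ) (n : ℕ) :
    (descPochhammer ℤ n).smeval r = ∏ j ∈ Finset.range n, (r - j) := by
  induction n with
  | zero => simp [descPochhammer_zero, Polynomial.smeval_one]
  | succ n ih =>
    rw [descPochhammer_succ_right, Polynomial.smeval_mul, ih, Finset.prod_range_succ]
    congr 1
    rw [Polynomial.smeval_sub, Polynomial.smeval_X, Polynomial.smeval_natCast]
    simp

lemma Bh_eq_choose (k : ℕ) : Bh k = Ring.choose ((1:ℝ)/2) k := by
  have h := Ring.descPochhammer_eq_factorial_smul_choose ((1:ℝ)/2) k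
  rw [smeval_descPochhammer] at h
  rw [Bh, h, nsmul_eq_mul]
  field_simp

lemma vandermonde (n : ℕ) :
    ∑ ij ∈ Finset.HasAntidiagonal.antidiagonal n, Bh ij.1 * Bh ij.2 = (Nat.choose 1 n : ℝ) := by
  have h := Ring.add_choose_eq (R := ℝ) (r := (1:ℝ)/2) (s := (1:ℝ)/2) n (Commute.all _ _)
  norm_num at h
  have h1 : Ring.choose (1 : ℝ) n = (Nat.choose 1 n : ℝ) := by
    exact_mod_cast Ring.choose_natCast (R := ℝ) 1 n
  rw [← h1, h]
  exact Finset.sum_congr rfl fun ij _ => by rw [Bh_eq_choose, Bh_eq_choose]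

noncomputable def zC : ℂ := Complex.exp ((Real.pi / 3 : ℝ) * Complex.I)

noncomputable def FC (k : ℕ) : ℂ := (Bh k : ℂ) * zC ^ k

lemma norm_zC_pow (k : ℕ) : ‖zC ^ k‖ = 1 := by
  rw [norm_pow, zC, Complex.norm_exp_ofReal_mul_I, one_pow]

lemma norm_FC (k : ℕ) : ‖FC k‖ = |Bh k| := by
  rw [FC, norm_mul, norm_zC_pow, mul_one, Complex.norm_real, Real.norm_eq_abs]

lemma summable_norm_FC : Summable (fun k => ‖FC k‖) := by
  simpa only [norm_FC] using summable_abs_Bh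

lemma summable_FC : Summable FC := summable_norm_FC.of_norm

lemma zC_pow_eq (k : ℕ) : zC ^ k = Complex.exp ((k * Real.pi / 3 : ℝ) * Complex.I) := by
  rw [zC, ← Complex.exp_nat_mul]
  congr 1
  push_cast
  ring

lemma FC_re (k : ℕ) : (FC k).re = Bh k * Real.cos (k * Real.pi / 3) := by
  rw [FC, zC_pow_eq, Complex.re_ofReal_mul, Complex.exp_ofReal_mul_I_re]

lemma sum_antidiagonal_FC (n : ℕ) :
    ∑ ij ∈ Finset.HasAntidiagonal.antidiagonal n, FC ij.1 * FC ij.2 = (Nat.choose 1 n : ℂ) * zC ^ n := by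
  have : ∀ ij ∈ Finset.HasAntidiagonal.antidiagonal n, FC ij.1 * FC ij.2 = ((Bh ij.1 * Bh ij.2 : ℝ) : ℂ) * zC ^ n := by
    intro ij hij
    have h := Finset.HasAntidiagonal.mem_antidiagonal.mp hij
    rw [FC, FC]
    push_cast
    rw [← h, pow_add]
    ring
  rw [Finset.sum_congr rfl this, ← Finset.sum_mul, ← Complex.ofReal_sum]
  rw [vandermonde]
  norm_num

set_option maxHeartbeats 1000000 in
lemma tsum_choose_zC : ∑' n : ℕ, (Nat.choose 1 n : ℂ) * zC ^ n = 1 + zC := by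
  have h : HasSum (fun n : ℕ => (Nat.choose 1 n : ℂ) * zC ^ n)
      (∑ n ∈ Finset.range 2, (Nat.choose 1 n : ℂ) * zC ^ n) := by
    apply hasSum_sum_of_ne_finset_zero
    intro n hn
    simp only [Finset.mem_range, not_lt] at hn
    rw [Nat.choose_eq_zero_of_lt (by omega)]
    simp
  rw [h.tsum_eq]
  norm_num [Finset.sum_range_succ]

lemma FC_sq : (∑' k, FC k) * (∑' k, FC k) = 1 + zC := by
  rw [tsum_mul_tsum_eq_tsum_sum_antidiagonal_of_summable_norm summable_norm_FC summable_norm_FC]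
  rw [tsum_congr sum_antidiagonal_FC, tsum_choose_zC]

lemma zC_re : zC.re = 1 / 2 := by
  rw [zC, Complex.exp_ofReal_mul_I_re, Real.cos_pi_div_three]

lemma zC_im : zC.im = Real.sqrt 3 / 2 := by
  rw [zC, Complex.exp_ofReal_mul_I_im, Real.sin_pi_div_three]

lemma tail_bound :
    ∑' k : ℕ, |Bh (k + 2)| ≤ 1 / 2 := by
  apply Real.tsum_le_of_sum_range_le (fun k => abs_nonneg _)
  intro n
  have hsum : ∑ i ∈ Finset.range n, |Bh (i + 2)| = uh 1 - uh (n + 1) := by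
    have h := Finset.sum_range_sub' (fun i => uh (i + 1)) n
    simp only [abs_Bh]
    simpa using h
  rw [hsum, uh_one]
  have := uh_pos (n + 1)
  linarith

set_option maxHeartbeats 1000000 in
theorem binomial_half_cos_sixty :
    HasSum
      (fun k : ℕ => ((∏ j ∈ Finset.range k, ((1 : ℝ) / 2 - j)) / k.factorial) * Real.cos (k * Real.pi / 3))
      ((1 / 2) * Real.sqrt (3 + 2 * Real.sqrt 3)) := by
  have hS : HasSum FC (∑' k, FC k) := summable_FC.hasSum
  set S := ∑' k, FC k with hSdef
  have hre : HasSum (fun k => (FC k).re) S.re := (Complex.hasSum_iff _ _).mp hS |>.1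
  have hre' : HasSum (fun k : ℕ => Bh k * Real.cos (k * Real.pi / 3)) S.re := by
    simpa only [FC_re] using hre
  set a := S.re with hadef
  set b := S.im with hbdef
  have hsq := FC_sq
  rw [← hSdef] at hsq
  have h1 : a * a - b * b = 3 / 2 := by
    have h := congrArg Complex.re hsq
    simp [Complex.mul_re, zC_re] at h
    rw [← hadef, ← hbdef] at h
    linarith
  have h2 : a * b + b * a = Real.sqrt 3 / 2 := by
    have h := congrArg Complex.im hsq
    simp [Complex.mul_im, zC_im] at h
    rw [← hadef, ← hbdef] at h
    linarith
  have hf : Summable (fun k : ℕ => Bh k * Real.cos (k * Real.pi / 3)) := hre'.summable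
  -- lower bound a ≥ 3/4
  have ha34 : (3:ℝ)/4 ≤ a := by
    have hsplit := Summable.sum_add_tsum_nat_add
      (f := fun k : ℕ => Bh k * Real.cos (k * Real.pi / 3)) 2 hf
    rw [hre'.tsum_eq] at hsplit
    have hhead : ∑ i ∈ Finset.range 2, Bh i * Real.cos (i * Real.pi / 3) = 5 / 4 := by
      rw [Finset.sum_range_succ, Finset.sum_range_one]
      norm_num [Bh_zero, Bh_one, Real.cos_pi_div_three]
    have hsum2 : Summable (fun k : ℕ => Bh (k + 2) * Real.cos ((k + 2 : ℕ) * Real.pi / 3)) :=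
      (summable_nat_add_iff 2).mpr hf
    have habs2 : Summable (fun k : ℕ => |Bh (k + 2)|) :=
      (summable_nat_add_iff 2).mpr summable_abs_Bh
    have hb1 : |∑' k : ℕ, Bh (k + 2) * Real.cos ((k + 2 : ℕ) * Real.pi / 3)|
        ≤ ∑' k : ℕ, |Bh (k + 2) * Real.cos ((k + 2 : ℕ) * Real.pi / 3)| := by
      have hn : Summable (fun k : ℕ => ‖Bh (k + 2) * Real.cos ((k + 2 : ℕ) * Real.pi / 3)‖) := by
        simp only [Real.norm_eq_abs]; exact hsum2.abs
      have := norm_tsum_le_tsum_norm hn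
      simp only [Real.norm_eq_abs] at this
      exact this
    have hb2 : ∑' k : ℕ, |Bh (k + 2) * Real.cos ((k + 2 : ℕ) * Real.pi / 3)|
        ≤ ∑' k : ℕ, |Bh (k + 2)| := by
      apply Summable.tsum_le_tsum _ hsum2.abs habs2
      intro k
      rw [abs_mul]
      exact mul_le_of_le_one_right (abs_nonneg _) (Real.abs_cos_le_one _)
    have htail : |∑' k : ℕ, Bh (k + 2) * Real.cos ((k + 2 : ℕ) * Real.pi / 3)| ≤ 1 / 2 :=
      le_trans hb1 (le_trans hb2 tail_bound)
    have := abs_le.mp htail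
    rw [hhead] at hsplit
    linarith [this.1]
  -- conclude
  have hs3 : Real.sqrt 3 ^ 2 = 3 := Real.sq_sqrt (by norm_num)
  have hs3' : (1:ℝ) ≤ Real.sqrt 3 := by nlinarith [Real.sqrt_nonneg 3]
  set t := Real.sqrt (3 + 2 * Real.sqrt 3) with htdef
  have ht0 : 0 ≤ t := Real.sqrt_nonneg _
  have ht2 : t ^ 2 = 3 + 2 * Real.sqrt 3 := Real.sq_sqrt (by nlinarith)
  have hb2' : 16 * (a * b) ^ 2 = 3 := by nlinarith [h2, hs3]
  have e1 : 16 * a ^ 4 - 24 * a ^ 2 - 3 = 0 := by nlinarith [h1, hb2']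
  have key : (4 * a ^ 2 - t ^ 2) * (4 * a ^ 2 + t ^ 2 - 6) = 0 := by
    nlinarith [e1, ht2, hs3]
  have hpos : 4 * a ^ 2 + t ^ 2 - 6 > 0 := by nlinarith [ht2, hs3', ha34]
  have h4 : 4 * a ^ 2 = t ^ 2 := by
    rcases mul_eq_zero.mp key with h | h
    · linarith
    · linarith
  have hfin : a = 1 / 2 * t := by
    have hzero : (2 * a - t) * (2 * a + t) = 0 := by nlinarith [h4]
    rcases mul_eq_zero.mp hzero with h | h
    · linarith
    · nlinarith [ha34, ht0]
  have : HasSum (fun k : ℕ => Bh k * Real.cos (k * Real.pi / 3)) (1 / 2 * t) := hfin ▸ hre'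
  exact this
end
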